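/- Let κ₀ ∈ (0,1) and set θ̄ = (1 − √(1 − κ₀))/κ₀ and θ̂ = (1 + √(1 − κ₀))/κ₀. Then 0 < θ̄ < θ̂, the quantity 2s − κ₀s² − 1 is positive for s ∈ (θ̄, θ̂) and vanishes at s = θ̄ and s = θ̂, and the improper integral ∫_{θ̄}^{θ̂} ds/(s·√(2s − κ₀s² − 1)) converges and equals π. -/

import Mathlib

open MeasureTheory
set_option maxHeartbeats 1000000

/-- For `κ₀ ∈ (0,1)` and the roots `θ̄ = (1 - √(1 - κ₀))/κ₀`, `θ̂ = (1 + √(1 - κ₀))/κ₀`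
of `2s - κ₀s² - 1`: one has `0 < θ̄ < θ̂`, the quantity `2s - κ₀s² - 1` is positive on
`(θ̄, θ̂)` and vanishes at the endpoints, and the improper integral
`∫_{θ̄}^{θ̂} ds/(s √(2s - κ₀s² - 1))` converges and equals `π`. -/
theorem stmt_16 (κ₀ : ℝ) (hκ : κ₀ ∈ Set.Ioo (0 : ℝ) 1) :
    0 < (1 - Real.sqrt (1 - κ₀)) / κ₀ ∧
    (1 - Real.sqrt (1 - κ₀)) / κ₀ < (1 + Real.sqrt (1 - κ₀)) / κ₀ ∧
    (∀ s ∈ Set.Ioo ((1 - Real.sqrt (1 - κ₀)) / κ₀) ((1 + Real.sqrt (1 - κ₀)) / κ₀),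
      0 < 2 * s - κ₀ * s ^ 2 - 1) ∧
    2 * ((1 - Real.sqrt (1 - κ₀)) / κ₀) - κ₀ * ((1 - Real.sqrt (1 - κ₀)) / κ₀) ^ 2 - 1 = 0 ∧
    2 * ((1 + Real.sqrt (1 - κ₀)) / κ₀) - κ₀ * ((1 + Real.sqrt (1 - κ₀)) / κ₀) ^ 2 - 1 = 0 ∧
    IntervalIntegrable (fun s => 1 / (s * Real.sqrt (2 * s - κ₀ * s ^ 2 - 1)))
      volume ((1 - Real.sqrt (1 - κ₀)) / κ₀) ((1 + Real.sqrt (1 - κ₀)) / κ₀) ∧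
    ∫ s in ((1 - Real.sqrt (1 - κ₀)) / κ₀)..((1 + Real.sqrt (1 - κ₀)) / κ₀),
        1 / (s * Real.sqrt (2 * s - κ₀ * s ^ 2 - 1)) = Real.pi := by
  obtain ⟨hκ0, hκ1⟩ := hκ
  have hκne : κ₀ ≠ 0 := ne_of_gt hκ0
  have ha : (0:ℝ) ≤ 1 - κ₀ := by linarith
  set r := Real.sqrt (1 - κ₀) with hrdef
  have hr2 : r * r = 1 - κ₀ := Real.mul_self_sqrt ha
  have hr0 : 0 < r := Real.sqrt_pos.mpr (by linarith)
  have hr1 : r < 1 := by nlinarith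
  set A := (1 - r) / κ₀ with hAdef
  set B := (1 + r) / κ₀ with hBdef
  have hA : 0 < A := div_pos (by linarith) hκ0
  have hAB : A < B := by
    rw [hAdef, hBdef, div_lt_div_iff₀ hκ0 hκ0]; nlinarith
  have hB : 0 < B := hA.trans hAB
  have hA1 : A * (1 + r) = 1 := by
    rw [hAdef]; field_simp; nlinarith
  have hB1 : B * (1 - r) = 1 := by
    rw [hBdef]; field_simp; nlinarith
  have key : ∀ s : ℝ, 2 * s - κ₀ * s ^ 2 - 1 = κ₀ * (s - A) * (B - s) := by
    intro s
    rw [hAdef, hBdef]; field_simp; nlinarith [hr2]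
  have hpos : ∀ s ∈ Set.Ioo A B, 0 < 2 * s - κ₀ * s ^ 2 - 1 := by
    intro s hs
    rw [key s]
    exact mul_pos (mul_pos hκ0 (by linarith [hs.1])) (by linarith [hs.2])
  have hzA : 2 * A - κ₀ * A ^ 2 - 1 = 0 := by rw [key A]; ring
  have hzB : 2 * B - κ₀ * B ^ 2 - 1 = 0 := by rw [key B]; ring
  -- antiderivative
  set F : ℝ → ℝ := fun s => Real.arcsin ((s - 1) / (s * r)) with hFdef
  set f : ℝ → ℝ := fun s => 1 / (s * Real.sqrt (2 * s - κ₀ * s ^ 2 - 1)) with hfdef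
  have hgA : (A - 1) / (A * r) = -1 := by
    rw [div_eq_iff (by positivity)]; nlinarith
  have hgB : (B - 1) / (B * r) = 1 := by
    rw [div_eq_iff (by positivity)]; nlinarith
  have hFA : F A = -(Real.pi / 2) := by
    rw [hFdef]; simp only [hgA]; exact Real.arcsin_neg_one
  have hFB : F B = Real.pi / 2 := by
    rw [hFdef]; simp only [hgB]; exact Real.arcsin_one
  have hderiv : ∀ s ∈ Set.Ioo A B, HasDerivAt F (f s) s := by
    intro s hs
    have hsA := hs.1
    have hsB := hs.2
    have hs0 : 0 < s := hA.trans hsA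
    have hsr : (0:ℝ) < s * r := by positivity
    have hP : 0 < 2 * s - κ₀ * s ^ 2 - 1 := hpos s hs
    set g : ℝ → ℝ := fun t => (t - 1) / (t * r) with hgdef
    have hg1 : -1 < g s := by
      rw [hgdef]
      rw [lt_div_iff₀ hsr]
      nlinarith [mul_lt_mul_of_pos_right hsA (by linarith : (0:ℝ) < 1 + r)]
    have hg2 : g s < 1 := by
      rw [hgdef, div_lt_iff₀ hsr]
      nlinarith [mul_lt_mul_of_pos_right hsB (by linarith : (0:ℝ) < 1 - r)]
    have hgd : HasDerivAt g ((1 * (s * r) - (s - 1) * (1 * r)) / (s * r) ^ 2) s := by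
      exact ((hasDerivAt_id s).sub_const 1).div ((hasDerivAt_id s).mul_const r) (ne_of_gt hsr)
    have harc : HasDerivAt Real.arcsin (1 / Real.sqrt (1 - g s ^ 2)) (g s) :=
      Real.hasDerivAt_arcsin (ne_of_gt hg1) (ne_of_lt hg2)
    have hcomp := harc.comp s hgd
    refine hcomp.congr_deriv ?_
    have h1g : 1 - g s ^ 2 = (2 * s - κ₀ * s ^ 2 - 1) / (s * r) ^ 2 := by
      rw [hgdef]
      field_simp
      nlinarith [hr2]
    rw [h1g, Real.sqrt_div hP.le, Real.sqrt_sq hsr.le, hfdef]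
    have hsP : 0 < Real.sqrt (2 * s - κ₀ * s ^ 2 - 1) := Real.sqrt_pos.mpr hP
    field_simp
    ring
  have hcontF : ContinuousOn F (Set.Icc A B) := by
    apply Real.continuous_arcsin.comp_continuousOn
    apply ContinuousOn.div
    · exact (continuous_id.sub continuous_const).continuousOn
    · exact (continuous_id.mul continuous_const).continuousOn
    · intro x hx
      have : 0 < x := lt_of_lt_of_le hA hx.1
      positivity
  have hfnonneg : ∀ s ∈ Set.Ioo A B, 0 ≤ f s := by
    intro s hs
    have hs0 : 0 < s := hA.trans hs.1
    rw [hfdef]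
    positivity
  have hint : IntervalIntegrable f volume A B := by
    apply intervalIntegral.intervalIntegrable_deriv_of_nonneg
    · rwa [Set.uIcc_of_le hAB.le]
    · rwa [min_eq_left hAB.le, max_eq_right hAB.le]
    · rwa [min_eq_left hAB.le, max_eq_right hAB.le]
  have hFcontA : ContinuousAt F A := by
    apply Real.continuous_arcsin.continuousAt.comp
    apply ContinuousAt.div
    · exact (continuous_id.sub continuous_const).continuousAt
    · exact (continuous_id.mul continuous_const).continuousAt
    · positivity
  have hFcontB : ContinuousAt F B := by
    apply Real.continuous_arcsin.continuousAt.comp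
    apply ContinuousAt.div
    · exact (continuous_id.sub continuous_const).continuousAt
    · exact (continuous_id.mul continuous_const).continuousAt
    · positivity
  have hval : ∫ s in A..B, f s = Real.pi := by
    have h := intervalIntegral.integral_eq_sub_of_hasDerivAt_of_tendsto hAB hderiv hint
      (hFcontA.tendsto.mono_left nhdsWithin_le_nhds)
      (hFcontB.tendsto.mono_left nhdsWithin_le_nhds)
    rw [h, hFA, hFB]; ring
  exact ⟨hA, hAB, hpos, hzA, hzB, hint, hval⟩
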